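/- Let Ψ: ℝᵈ × [0,T] → ℝ be a C² solution of the Hamilton-Jacobi equation -∂_t Ψ = H(∂_θ Ψ, θ) with H(u,θ) = Σ_k θ_k h̃(Δ_k u, k) + F(θ). Then U^i := ∂_{θ_i} Ψ solves the hyperbolic system -∂_t U^i = Σ_j g_j(U,θ) ∂_{θ_j} U^i + h̃(Δ_i U, i) + ∂_{θ_i} F(θ), where g_j(U,θ) = Σ_k θ_k ∂_{u_j} h̃(Δ_k U, k). -/

import Mathlib

/-- Invariance: the derivative of `htil · k` in a constant direction vanishes,
since `htil · k` depends only on the differences `u j - u k`. -/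
theorem aux_inv_potential_mfg {d : ℕ} (htil : (Fin d → ℝ) → Fin d → ℝ) (k : Fin d)
    (hhtil : Differentiable ℝ (fun u => htil u k))
    (hdep : ∀ u v : Fin d → ℝ, (∀ j, u j - u k = v j - v k) → htil u k = htil v k)
    (u : Fin d → ℝ) (c : ℝ) :
    fderiv ℝ (fun u => htil u k) u (fun _ => c) = 0 := by
  have hline : HasDerivAt (fun s : ℝ => u + s • (fun _ => c : Fin d → ℝ))
      (fun _ => c : Fin d → ℝ) 0 := by
    simpa using ((hasDerivAt_id (0 : ℝ)).smul_const (fun _ => c : Fin d → ℝ)).const_add u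
  have hfd : HasFDerivAt (fun u => htil u k) (fderiv ℝ (fun u => htil u k) u)
      (u + (0 : ℝ) • (fun _ => c : Fin d → ℝ)) := by
    simpa using ((hhtil u).hasFDerivAt)
  have hcomp : HasDerivAt (fun s : ℝ => htil (u + s • (fun _ => c : Fin d → ℝ)) k)
      (fderiv ℝ (fun u => htil u k) u (fun _ => c)) 0 := by
    have h := hfd.comp_hasDerivAt 0 hline; exact h
  have hgconst : (fun s : ℝ => htil (u + s • (fun _ => c : Fin d → ℝ)) k) =
      fun _ => htil u k := by
    funext s
    exact hdep _ u (fun j => by simp)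
  rw [hgconst] at hcomp
  simpa using hcomp.unique (hasDerivAt_const 0 _)

/-- Expanding a continuous linear functional on a shifted vector. -/
theorem aux_lin_potential_mfg {d : ℕ} (L : (Fin d → ℝ) →L[ℝ] ℝ) (b : Fin d → ℝ) (c : ℝ)
    (h0 : L (fun _ => c) = 0) :
    L (fun j => b j - c) = ∑ j, b j * L (Pi.single j 1) := by
  have hb : (fun j => b j - c) =
      (∑ j, b j • (Pi.single j (1 : ℝ) : Fin d → ℝ)) - (fun _ => c) := by
    funext m
    simp [Finset.sum_apply, Pi.single_apply]
  rw [hb, map_sub, h0, sub_zero, map_sum]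
  simp [smul_eq_mul]

/-- Potential mean field games: if `Ψ(θ,t)` is a `C²` solution of the Hamilton-Jacobi
equation `-∂ₜΨ = H(∂_θΨ, θ)` with `H(u,θ) = ∑ₖ θₖ h̃(Δₖu, k) + F(θ)`, where
`Δₖu = (u¹-uᵏ,…,u^d-uᵏ)`, then `Uⁱ := ∂_{θᵢ}Ψ` solves the hyperbolic system
`-∂ₜUⁱ = ∑ⱼ gⱼ(U,θ) ∂_{θⱼ}Uⁱ + h̃(ΔᵢU, i) + ∂_{θᵢ}F(θ)` with
`gⱼ(U,θ) = ∑ₖ θₖ ∂_{uⱼ}h̃(ΔₖU, k)`.  Partial derivatives are expressed via `fderiv`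
in the coordinate directions. -/
theorem potential_mfg_gradient_solves_system (d : ℕ)
    (Ψ : ((Fin d → ℝ) × ℝ) → ℝ) (htil : (Fin d → ℝ) → Fin d → ℝ)
    (F : (Fin d → ℝ) → ℝ)
    (hΨ : ContDiff ℝ 2 Ψ)
    (hhtil : ∀ k, Differentiable ℝ (fun u => htil u k))
    (hF : Differentiable ℝ F)
    (hdep : ∀ k : Fin d, ∀ u v : Fin d → ℝ,
      (∀ j, u j - u k = v j - v k) → htil u k = htil v k)
    (hHJ : ∀ θ : Fin d → ℝ, ∀ t : ℝ,
      -(fderiv ℝ Ψ (θ, t) (0, 1)) =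
        (∑ k, θ k * htil (fun j =>
            fderiv ℝ Ψ (θ, t) (Pi.single j 1, 0) -
              fderiv ℝ Ψ (θ, t) (Pi.single k 1, 0)) k) + F θ) :
    ∀ i : Fin d, ∀ θ : Fin d → ℝ, ∀ t : ℝ,
      -(fderiv ℝ (fun p => fderiv ℝ Ψ p (Pi.single i 1, 0)) (θ, t) (0, 1)) =
        (∑ j, (∑ k, θ k *
            fderiv ℝ (fun u => htil u k)
              (fun l => fderiv ℝ Ψ (θ, t) (Pi.single l 1, 0) -
                fderiv ℝ Ψ (θ, t) (Pi.single k 1, 0)) (Pi.single j 1)) *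
          fderiv ℝ (fun p => fderiv ℝ Ψ p (Pi.single i 1, 0)) (θ, t) (Pi.single j 1, 0))
        + htil (fun j => fderiv ℝ Ψ (θ, t) (Pi.single j 1, 0) -
            fderiv ℝ Ψ (θ, t) (Pi.single i 1, 0)) i
        + fderiv ℝ F θ (Pi.single i 1) := by
  intro i θ t
  classical
  have hΨ1 : ContDiff ℝ 1 (fderiv ℝ Ψ) := hΨ.fderiv_right (by norm_num)
  have hB : ∀ x : (Fin d → ℝ) × ℝ, HasFDerivAt (fderiv ℝ Ψ) (fderiv ℝ (fderiv ℝ Ψ) x) x :=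
    fun x => ((hΨ1.differentiable one_ne_zero) x).hasFDerivAt
  have hEval : ∀ (x v : (Fin d → ℝ) × ℝ),
      HasFDerivAt (fun p => fderiv ℝ Ψ p v) ((fderiv ℝ (fderiv ℝ Ψ) x).flip v) x :=
    fun x v => by simpa using (hB x).clm_apply (hasFDerivAt_const v x)
  set x : (Fin d → ℝ) × ℝ := (θ, t) with hxdef
  set B : ((Fin d → ℝ) × ℝ) →L[ℝ] ((Fin d → ℝ) × ℝ) →L[ℝ] ℝ :=
    fderiv ℝ (fderiv ℝ Ψ) x with hBdef
  have hsymm : ∀ v w, B v w = B w v :=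
    fun v w => hΨ.contDiffAt.isSymmSndFDerivAt (by norm_num) v w
  set vmap : Fin d → ((Fin d → ℝ) × ℝ) → (Fin d → ℝ) :=
    fun k p j => fderiv ℝ Ψ p (Pi.single j 1, 0) - fderiv ℝ Ψ p (Pi.single k 1, 0) with hvmapdef
  set Vk : Fin d → (((Fin d → ℝ) × ℝ) →L[ℝ] (Fin d → ℝ)) :=
    fun k => ContinuousLinearMap.pi
      (fun j => B.flip (Pi.single j 1, 0) - B.flip (Pi.single k 1, 0)) with hVkdef
  have hvk : ∀ k, HasFDerivAt (vmap k) (Vk k) x := by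
    intro k
    apply hasFDerivAt_pi''
    intro j
    simpa [Vk, ContinuousLinearMap.proj_pi] using
      (hEval x (Pi.single j 1, 0)).fun_sub (hEval x (Pi.single k 1, 0))
  set L : Fin d → (((Fin d → ℝ) × ℝ) →L[ℝ] ℝ) := fun k =>
    θ k • ((fderiv ℝ (fun u => htil u k) (vmap k x)).comp (Vk k)) +
      (htil (vmap k x) k) • ((ContinuousLinearMap.proj k).comp
        (ContinuousLinearMap.fst ℝ (Fin d → ℝ) ℝ)) with hLdef
  have hterm : ∀ k, HasFDerivAt (fun p : (Fin d → ℝ) × ℝ => p.1 k * htil (vmap k p) k)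
      (L k) x := by
    intro k
    have h1 : HasFDerivAt (fun p : (Fin d → ℝ) × ℝ => p.1 k)
        ((ContinuousLinearMap.proj k).comp (ContinuousLinearMap.fst ℝ (Fin d → ℝ) ℝ)) x := by
      have h := (hasFDerivAt_apply k x.1).comp x (hasFDerivAt_fst : HasFDerivAt (Prod.fst : (Fin d → ℝ) × ℝ → Fin d → ℝ) (ContinuousLinearMap.fst ℝ (Fin d → ℝ) ℝ) x); exact h
    have h2 : HasFDerivAt (fun p : (Fin d → ℝ) × ℝ => htil (vmap k p) k)
        ((fderiv ℝ (fun u => htil u k) (vmap k x)).comp (Vk k)) x :=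
      (((hhtil k) (vmap k x)).hasFDerivAt).comp x (hvk k)
    exact h1.mul h2
  have hRHS : HasFDerivAt
      (fun p : (Fin d → ℝ) × ℝ => (∑ k, p.1 k * htil (vmap k p) k) + F p.1)
      ((∑ k, L k) + (fderiv ℝ F θ).comp (ContinuousLinearMap.fst ℝ (Fin d → ℝ) ℝ)) x := by
    have h := (HasFDerivAt.fun_sum (u := Finset.univ) fun k _ => hterm k).fun_add ((hF θ).hasFDerivAt.comp x (hasFDerivAt_fst)); exact h
  have hLHS : HasFDerivAt (fun p : (Fin d → ℝ) × ℝ => -(fderiv ℝ Ψ p (0, 1)))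
      (-(B.flip (0, 1))) x :=
    (hEval x (0, 1)).neg
  have hfe : (fun p : (Fin d → ℝ) × ℝ => -(fderiv ℝ Ψ p (0, 1))) =
      fun p : (Fin d → ℝ) × ℝ => (∑ k, p.1 k * htil (vmap k p) k) + F p.1 := by
    funext p
    obtain ⟨a, b⟩ := p
    exact hHJ a b
  have heq : -(B.flip (0, 1)) =
      (∑ k, L k) + (fderiv ℝ F θ).comp (ContinuousLinearMap.fst ℝ (Fin d → ℝ) ℝ) :=
    hLHS.unique (hfe ▸ hRHS)
  have key := congrArg
    (fun M : ((Fin d → ℝ) × ℝ) →L[ℝ] ℝ => M ((Pi.single i 1 : Fin d → ℝ), (0 : ℝ))) heq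
  simp only [L, Vk, ContinuousLinearMap.neg_apply, ContinuousLinearMap.flip_apply,
    ContinuousLinearMap.coe_sum', Finset.sum_apply, ContinuousLinearMap.add_apply,
    ContinuousLinearMap.smul_apply, ContinuousLinearMap.comp_apply,
    ContinuousLinearMap.pi_apply, ContinuousLinearMap.sub_apply,
    ContinuousLinearMap.proj_apply, ContinuousLinearMap.coe_fst', smul_eq_mul] at key
  -- abbreviations for the second-derivative entries and the h-derivative matrix
  set a : Fin d → ℝ := fun j => B (Pi.single j 1, 0) (Pi.single i 1, 0) with hadef
  set D : Fin d → Fin d → ℝ := fun k j =>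
    fderiv ℝ (fun u => htil u k) (vmap k x) (Pi.single j 1) with hDdef
  have hVw : ∀ k : Fin d,
      ((ContinuousLinearMap.pi fun j => B.flip (Pi.single j 1, 0) -
        B.flip (Pi.single k 1, 0)) ((Pi.single i 1 : Fin d → ℝ), (0 : ℝ)))
        = fun j => a j - a k := by
    intro k
    funext j
    simp [a, ContinuousLinearMap.pi_apply, ContinuousLinearMap.sub_apply,
      ContinuousLinearMap.flip_apply, hsymm]
  have hDk : ∀ k : Fin d,
      fderiv ℝ (fun u => htil u k) (vmap k x)
        ((ContinuousLinearMap.pi fun j => B.flip (Pi.single j 1, 0) -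
          B.flip (Pi.single k 1, 0)) ((Pi.single i 1 : Fin d → ℝ), (0 : ℝ)))
        = ∑ j, a j * D k j := by
    intro k
    rw [hVw k]
    exact aux_lin_potential_mfg _ a (a k)
      (aux_inv_potential_mfg htil k (hhtil k) (hdep k) _ _)
  have hsingle : ∑ k, htil (vmap k x) k * (Pi.single i 1 : Fin d → ℝ) k = htil (vmap i x) i := by
    rw [Finset.sum_eq_single i]
    · simp
    · intro k _ hk
      simp [Pi.single_apply, hk]
    · simp
  have hswap : ∑ k, θ k * ∑ j, a j * D k j = ∑ j, (∑ k, θ k * D k j) * a j := by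
    simp_rw [Finset.mul_sum, Finset.sum_mul]
    rw [Finset.sum_comm]
    exact Finset.sum_congr rfl fun j _ => Finset.sum_congr rfl fun k _ => by ring
  have final : -(B (0, 1) ((Pi.single i 1 : Fin d → ℝ), (0 : ℝ))) =
      (∑ j, (∑ k, θ k * D k j) * B (Pi.single j 1, 0) (Pi.single i 1, 0)) +
        htil (vmap i x) i + fderiv ℝ F θ (Pi.single i 1) := by
    rw [hsymm (0, 1), key]
    rw [Finset.sum_add_distrib, hsingle]
    simp_rw [hDk]
    rw [hswap]
  rw [(hEval x (Pi.single i 1, 0)).fderiv]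
  simp only [ContinuousLinearMap.flip_apply]
  exact final
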